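/- Consider a system S of m equations ∏_{i ∈ I_j} x_i = b_j (j = 1,…,m), where the I_j are distinct nonempty subsets of [n], b_j ∈ {-1,1}, and each equation j carries a positive integral weight w_j; let W = Σ_{j=1}^m w_j, and suppose every variable index i ∈ [n] appears in at most ρ of the sets I_j. Then there exists an assignment x ∈ {-1,1}^n such that the total weight of satisfied equations is at least W/2 + (1/4)·√(m/(2ρ+1)). -/

import Mathlib

open scoped Classical
open scoped symmDiff

/-- The ±1 value of a Boolean coordinate. -/
noncomputable def sgn (b : Bool) : ℝ := if b then 1 else -1

namespace MaxLinAux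

open Finset

lemma sgn_sq (b : Bool) : sgn b * sgn b = 1 := by cases b <;> norm_num [sgn]

lemma sgn_pm (b : Bool) : sgn b = 1 ∨ sgn b = -1 := by cases b <;> simp [sgn]

noncomputable def chi {n : ℕ} (A : Finset (Fin n)) (x : Fin n → Bool) : ℝ :=
  ∏ i ∈ A, sgn (x i)

lemma chi_pm {n : ℕ} (A : Finset (Fin n)) (x : Fin n → Bool) :
    chi A x = 1 ∨ chi A x = -1 := by
  refine Finset.prod_induction _ (fun r => r = 1 ∨ r = -1) ?_ (Or.inl rfl)
    (fun i _ => sgn_pm (x i))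
  rintro a b (rfl | rfl) (rfl | rfl) <;> norm_num

lemma chi_eq_prod_univ {n : ℕ} (A : Finset (Fin n)) (x : Fin n → Bool) :
    chi A x = ∏ i : Fin n, (if i ∈ A then sgn (x i) else 1) := by
  rw [Finset.prod_ite_mem, Finset.univ_inter, chi]

lemma chi_mul {n : ℕ} (A B : Finset (Fin n)) (x : Fin n → Bool) :
    chi A x * chi B x = chi (A ∆ B) x := by
  simp only [chi_eq_prod_univ, ← Finset.prod_mul_distrib]
  refine Finset.prod_congr rfl fun i _ => ?_
  by_cases hA : i ∈ A <;> by_cases hB : i ∈ B <;>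
    simp [Finset.mem_symmDiff, hA, hB, sgn_sq]

lemma sum_chi {n : ℕ} (A : Finset (Fin n)) :
    ∑ x : Fin n → Bool, chi A x = if A = ∅ then (2:ℝ)^n else 0 := by
  simp only [chi_eq_prod_univ]
  have h0 := Finset.prod_univ_sum (fun _ : Fin n => (Finset.univ : Finset Bool))
    (fun i b => if i ∈ A then sgn b else 1)
  rw [Fintype.piFinset_univ] at h0
  rw [← h0]
  have h1 : ∀ i : Fin n, (∑ b : Bool, (if i ∈ A then sgn b else 1))
      = if i ∈ A then 0 else 2 := by
    intro i; by_cases h : i ∈ A <;> simp [h, sgn]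
  rw [Finset.prod_congr rfl fun i _ => h1 i]
  by_cases hA : A = ∅
  · simp [hA]
  · rw [if_neg hA]
    obtain ⟨i, hi⟩ := Finset.nonempty_iff_ne_empty.mpr hA
    exact Finset.prod_eq_zero (Finset.mem_univ i) (by simp [hi])

lemma sum_chi_mul {n : ℕ} (A B : Finset (Fin n)) :
    ∑ x : Fin n → Bool, chi A x * chi B x = if A = B then (2:ℝ)^n else 0 := by
  simp only [chi_mul, sum_chi]
  congr 1
  simp [← Finset.bot_eq_empty, symmDiff_eq_bot]

variable {n m ρ : ℕ}

lemma fiber_card (I : Fin m → Finset (Fin n)) (hinj : Function.Injective I)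
    (hρ : ∀ i : Fin n, (Finset.univ.filter (fun j => i ∈ I j)).card ≤ ρ)
    (p : Fin m × Fin m) (hp : p.1 ≠ p.2) :
    (Finset.univ.filter
      (fun q : Fin m × Fin m => I p.1 ∆ I p.2 = I q.1 ∆ I q.2)).card ≤ 2 * ρ := by
  have hD : (I p.1 ∆ I p.2).Nonempty := by
    rw [Finset.nonempty_iff_ne_empty]
    intro h
    exact hp (hinj (symmDiff_eq_bot.mp h))
  obtain ⟨i, hi⟩ := hD
  have hcard : ((Finset.univ : Finset Bool) ×ˢ
      (Finset.univ.filter fun j => i ∈ I j)).card ≤ 2 * ρ := by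
    rw [Finset.card_product]
    have : (Finset.univ : Finset Bool).card = 2 := by simp
    rw [this]
    exact Nat.mul_le_mul_left 2 (hρ i)
  refine le_trans (Finset.card_le_card_of_injOn
    (fun q => if i ∈ I q.1 then (true, q.1) else (false, q.2)) ?_ ?_) hcard
  · intro q hq
    simp only [Finset.mem_coe, Finset.mem_filter, Finset.mem_univ, true_and] at hq
    have hi' : i ∈ I q.1 ∆ I q.2 := hq ▸ hi
    by_cases h1 : i ∈ I q.1
    · simp [h1, Finset.mem_product]
    · have h2 : i ∈ I q.2 := by
        rcases Finset.mem_symmDiff.mp hi' with ⟨h, _⟩ | ⟨h, _⟩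
        · exact absurd h h1
        · exact h
      simp [h1, h2, Finset.mem_product]
  · intro q1 hq1 q2 hq2 heq
    simp only [Finset.mem_coe, Finset.mem_filter, Finset.mem_univ, true_and] at hq1 hq2
    have hDD : I q1.1 ∆ I q1.2 = I q2.1 ∆ I q2.2 := by rw [← hq1, ← hq2]
    by_cases ha : i ∈ I q1.1 <;> by_cases hb : i ∈ I q2.1 <;>
      simp only [ha, hb, if_true, if_false, Prod.mk.injEq] at heq
    · obtain ⟨-, h11⟩ := heq
      have h12 : q1.2 = q2.2 := by
        apply hinj
        rw [← h11] at hDD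
        have h' := congrArg (fun s => I q1.1 ∆ s) hDD
        simpa using h'
      exact Prod.ext h11 h12
    · exact absurd heq.1 (by simp)
    · exact absurd heq.1 (by simp)
    · obtain ⟨-, h22⟩ := heq
      have h11 : q1.1 = q2.1 := by
        apply hinj
        have h' : I q1.1 ∆ I q1.2 ∆ I q1.2 = I q2.1 ∆ I q1.2 ∆ I q1.2 := by
          rw [hDD, ← h22]
        simpa [symmDiff_symmDiff_cancel_right] using h'
      exact Prod.ext h11 h22

lemma counting (I : Fin m → Finset (Fin n)) (hinj : Function.Injective I)
    (hρ : ∀ i : Fin n, (Finset.univ.filter (fun j => i ∈ I j)).card ≤ ρ)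
    (c : Fin m → ℝ) :
    ∑ z ∈ Finset.univ.filter (fun z : (Fin m × Fin m) × (Fin m × Fin m) =>
        I z.1.1 ∆ I z.1.2 = I z.2.1 ∆ I z.2.2),
      (c z.1.1 * c z.1.2) * (c z.2.1 * c z.2.2)
      ≤ (2 * (ρ : ℝ) + 1) * (∑ j, (c j)^2)^2 := by
  set S : ℝ := ∑ j, (c j)^2 with hS
  have hS0 : 0 ≤ S := Finset.sum_nonneg fun j _ => sq_nonneg _
  set c2 : Fin m × Fin m → ℝ := fun p => c p.1 * c p.2 with hc2
  set D : Fin m × Fin m → Finset (Fin n) := fun p => I p.1 ∆ I p.2 with hD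
  have hsumsq : ∑ p : Fin m × Fin m, (c2 p)^2 = S^2 := by
    rw [Fintype.sum_prod_type]
    simp only [hc2, mul_pow]
    rw [← Finset.sum_mul_sum, hS, sq]
  have key : ∀ z : (Fin m × Fin m) × (Fin m × Fin m),
      (I z.1.1 ∆ I z.1.2 = I z.2.1 ∆ I z.2.2) = (D z.1 = D z.2) := fun z => rfl
  simp only [key]
  rw [← Finset.sum_filter_add_sum_filter_not
    (Finset.univ.filter (fun z : (Fin m × Fin m) × (Fin m × Fin m) => D z.1 = D z.2))
    (fun z => z.1.1 = z.1.2) (fun z => c2 z.1 * c2 z.2)]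
  simp only [Finset.filter_filter]
  set A := Finset.univ.filter
    (fun z : (Fin m × Fin m) × (Fin m × Fin m) => D z.1 = D z.2 ∧ z.1.1 = z.1.2) with hA
  set B := Finset.univ.filter
    (fun z : (Fin m × Fin m) × (Fin m × Fin m) => D z.1 = D z.2 ∧ ¬ z.1.1 = z.1.2) with hB
  have hDempty : ∀ p : Fin m × Fin m, D p = ∅ ↔ p.1 = p.2 := by
    intro p
    constructor
    · intro h; exact hinj (symmDiff_eq_bot.mp h)
    · intro h; rw [hD]; simp only [h]; exact symmDiff_self _
  have partA : ∑ z ∈ A, c2 z.1 * c2 z.2 ≤ S^2 := by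
    have hrw : ∀ z ∈ A, c2 z.1 * c2 z.2 = (c z.1.1)^2 * (c z.2.1)^2 := by
      intro z hz
      simp only [hA, Finset.mem_filter, Finset.mem_univ, true_and] at hz
      obtain ⟨hd, h1⟩ := hz
      have h2 : z.2.1 = z.2.2 := by
        rw [← hDempty]
        rw [← hd, hDempty]
        exact h1
      simp only [hc2, ← h1, ← h2]; ring
    rw [Finset.sum_congr rfl hrw]
    have hinjA : Set.InjOn (fun z : (Fin m × Fin m) × (Fin m × Fin m) => (z.1.1, z.2.1)) A := by
      intro z1 hz1 z2 hz2 h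
      simp only [Finset.mem_coe, hA, Finset.mem_filter, Finset.mem_univ, true_and] at hz1 hz2
      simp only [Prod.mk.injEq] at h
      obtain ⟨e11, e21⟩ := h
      have h12 : z1.2.1 = z1.2.2 := by rw [← hDempty, ← hz1.1, hDempty]; exact hz1.2
      have h22 : z2.2.1 = z2.2.2 := by rw [← hDempty, ← hz2.1, hDempty]; exact hz2.2
      refine Prod.ext (Prod.ext e11 ?_) (Prod.ext e21 ?_)
      · rw [← hz1.2, ← hz2.2]; exact e11
      · rw [← h12, ← h22]; exact e21
    calc ∑ z ∈ A, (c z.1.1)^2 * (c z.2.1)^2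
        = ∑ y ∈ A.image (fun z => (z.1.1, z.2.1)), (c y.1)^2 * (c y.2)^2 := by
          rw [Finset.sum_image (fun z hz w hw h => hinjA hz hw h)]
      _ ≤ ∑ y : Fin m × Fin m, (c y.1)^2 * (c y.2)^2 :=
          Finset.sum_le_sum_of_subset_of_nonneg (Finset.subset_univ _)
            (fun y _ _ => mul_nonneg (sq_nonneg _) (sq_nonneg _))
      _ = S^2 := by
          rw [show S^2 = ∑ j : Fin m, ∑ k : Fin m, (c j)^2 * (c k)^2 by
                rw [sq, Finset.sum_mul_sum], Fintype.sum_prod_type]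
  have hBswap : ∀ z : (Fin m × Fin m) × (Fin m × Fin m), z ∈ B → (z.2, z.1) ∈ B := by
    intro z hz
    simp only [hB, Finset.mem_filter, Finset.mem_univ, true_and] at hz ⊢
    refine ⟨hz.1.symm, ?_⟩
    intro h
    apply hz.2
    rw [← hDempty, hz.1, hDempty]
    exact h
  have hswapsum : ∑ z ∈ B, (c2 z.2)^2 = ∑ z ∈ B, (c2 z.1)^2 := by
    refine Finset.sum_nbij' (fun z => (z.2, z.1)) (fun z => (z.2, z.1)) ?_ ?_ ?_ ?_ ?_
    · exact fun z hz => hBswap z hz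
    · exact fun z hz => hBswap z hz
    · intro z _; rfl
    · intro z _; rfl
    · intro z _; rfl
  have partB1 : ∑ z ∈ B, c2 z.1 * c2 z.2 ≤ ∑ z ∈ B, (c2 z.1)^2 := by
    have h0 : ∑ z ∈ B, c2 z.1 * c2 z.2 ≤ ∑ z ∈ B, ((c2 z.1)^2 + (c2 z.2)^2) / 2 :=
      Finset.sum_le_sum fun z _ => by nlinarith [sq_nonneg (c2 z.1 - c2 z.2)]
    calc ∑ z ∈ B, c2 z.1 * c2 z.2 ≤ ∑ z ∈ B, ((c2 z.1)^2 + (c2 z.2)^2) / 2 := h0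
      _ = (∑ z ∈ B, (c2 z.1)^2 + ∑ z ∈ B, (c2 z.2)^2) / 2 := by
          rw [← Finset.sum_add_distrib, Finset.sum_div]
      _ = ∑ z ∈ B, (c2 z.1)^2 := by rw [hswapsum]; ring
  have partB2 : ∑ z ∈ B, (c2 z.1)^2 ≤ 2 * (ρ : ℝ) * S^2 := by
    rw [hB, Finset.sum_filter, Fintype.sum_prod_type]
    have hinner : ∀ p : Fin m × Fin m,
        (∑ q : Fin m × Fin m, if D p = D q ∧ ¬ p.1 = p.2 then (c2 p)^2 else 0)
          ≤ 2 * (ρ : ℝ) * (c2 p)^2 := by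
      intro p
      by_cases hp : p.1 = p.2
      · simp only [hp, not_true, and_false, if_false, Finset.sum_const_zero]
        positivity
      · simp only [hp, not_false_iff, and_true]
        rw [← Finset.sum_filter, Finset.sum_const, nsmul_eq_mul]
        have hcard := fiber_card I hinj hρ p hp
        calc ((Finset.univ.filter fun q : Fin m × Fin m => D p = D q).card : ℝ) * (c2 p)^2
            ≤ ((2 * ρ : ℕ) : ℝ) * (c2 p)^2 := by
              apply mul_le_mul_of_nonneg_right _ (sq_nonneg _)
              exact_mod_cast hcard
          _ = 2 * (ρ : ℝ) * (c2 p)^2 := by push_cast; ring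
    calc ∑ p : Fin m × Fin m, (∑ q : Fin m × Fin m,
            if D p = D q ∧ ¬ p.1 = p.2 then (c2 p)^2 else 0)
        ≤ ∑ p : Fin m × Fin m, 2 * (ρ : ℝ) * (c2 p)^2 :=
          Finset.sum_le_sum fun p _ => hinner p
      _ = 2 * (ρ : ℝ) * S^2 := by rw [← Finset.mul_sum, hsumsq]
  nlinarith [partA, partB1, partB2]

end MaxLinAux

open MaxLinAux Finset

/-- **MaxLin-AA with bounded variable occurrence.**
Given a system of `m` equations `∏_{i ∈ I_j} x_i = b_j` over `x ∈ {-1,1}^n`, where the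
`I_j` are distinct nonempty subsets of `[n]`, `b_j ∈ {-1,1}`, each equation has a positive
integral weight `w_j` with total weight `W = ∑ w_j`, and each variable occurs in at most
`ρ` equations, there is an assignment satisfying equations of total weight at least
`W/2 + (1/4)·√(m/(2ρ+1))`. -/
theorem maxlin_excess_above_average (n m ρ : ℕ)
    (I : Fin m → Finset (Fin n)) (hinj : Function.Injective I) (hne : ∀ j, I j ≠ ∅)
    (b : Fin m → ℝ) (hb : ∀ j, b j = 1 ∨ b j = -1)
    (w : Fin m → ℕ) (hw : ∀ j, 0 < w j)
    (hρ : ∀ i : Fin n, (Finset.univ.filter (fun j => i ∈ I j)).card ≤ ρ) :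
    ∃ x : Fin n → Bool,
      (∑ j : Fin m, if (∏ i ∈ I j, sgn (x i)) = b j then (w j : ℝ) else 0) ≥
        (∑ j : Fin m, (w j : ℝ)) / 2 + (1 / 4) * Real.sqrt (m / (2 * ρ + 1)) := by
  classical
  rcases Nat.eq_zero_or_pos m with hm | hm
  · subst hm
    exact ⟨fun _ => true, by simp⟩
  set bb : ℝ := 2 * (ρ : ℝ) + 1 with hbb
  have hbb0 : 0 < bb := by positivity
  set c : Fin m → ℝ := fun j => (w j : ℝ) * b j with hc
  set Q : (Fin n → Bool) → ℝ := fun x => ∑ j, c j * chi (I j) x with hQdef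
  set S : ℝ := ∑ j, (c j)^2 with hSdef
  set N : ℝ := (2:ℝ)^n with hN
  have hN0 : 0 < N := by positivity
  have hSm : (m : ℝ) ≤ S := by
    rw [hSdef]
    calc (m:ℝ) = ∑ _j : Fin m, (1:ℝ) := by simp
      _ ≤ ∑ j, (c j)^2 := by
          refine Finset.sum_le_sum fun j _ => ?_
          have h1 : (1:ℝ) ≤ (w j : ℝ) := by exact_mod_cast hw j
          rcases hb j with h | h <;> rw [hc] <;> simp only [h] <;> nlinarith
  have hS0 : 0 < S := lt_of_lt_of_le (by exact_mod_cast hm) hSm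
  -- first moment
  have h1 : ∑ x : Fin n → Bool, Q x = 0 := by
    simp only [hQdef]
    rw [Finset.sum_comm]
    refine Finset.sum_eq_zero fun j _ => ?_
    rw [← Finset.mul_sum, sum_chi, if_neg (hne j), mul_zero]
  -- second moment
  have h2 : ∑ x : Fin n → Bool, (Q x)^2 = N * S := by
    have hQsq : ∀ x, (Q x)^2 = ∑ j : Fin m, ∑ k : Fin m,
        (c j * c k) * (chi (I j) x * chi (I k) x) := by
      intro x
      rw [hQdef, sq, Finset.sum_mul_sum]
      exact Finset.sum_congr rfl fun j _ => Finset.sum_congr rfl fun k _ => by ring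
    simp only [hQsq]
    rw [Finset.sum_comm]
    have hswap : ∀ j, ∑ x : Fin n → Bool, ∑ k, (c j * c k) * (chi (I j) x * chi (I k) x)
        = ∑ k, (c j * c k) * (if I j = I k then N else 0) := by
      intro j
      rw [Finset.sum_comm]
      refine Finset.sum_congr rfl fun k _ => ?_
      rw [← Finset.mul_sum, sum_chi_mul]
    rw [Finset.sum_congr rfl fun j _ => hswap j]
    have hIeq : ∀ j k : Fin m, (I j = I k) = (j = k) :=
      fun j k => propext ⟨fun h => hinj h, fun h => by rw [h]⟩
    simp only [hIeq, mul_ite, mul_zero]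
    have hdiag : ∀ j : Fin m, (∑ k : Fin m, if j = k then c j * c k * N else 0)
        = c j * c j * N := by
      intro j
      rw [Finset.sum_ite_eq]
      simp
    rw [Finset.sum_congr rfl fun j _ => hdiag j, hSdef, Finset.mul_sum]
    exact Finset.sum_congr rfl fun j _ => by ring
  -- fourth moment
  have h4 : ∑ x : Fin n → Bool, (Q x)^4 ≤ bb * N * S^2 := by
    set c2 : Fin m × Fin m → ℝ := fun p => c p.1 * c p.2 with hc2
    set D : Fin m × Fin m → Finset (Fin n) := fun p => I p.1 ∆ I p.2 with hD
    have hQ2 : ∀ x, (Q x)^2 = ∑ p : Fin m × Fin m, c2 p * chi (D p) x := by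
      intro x
      rw [hQdef, sq, Finset.sum_mul_sum, Fintype.sum_prod_type]
      refine Finset.sum_congr rfl fun j _ => Finset.sum_congr rfl fun k _ => ?_
      rw [hc2, hD]
      simp only [← chi_mul]
      ring
    have hQ4 : ∀ x, (Q x)^4 = ∑ p : Fin m × Fin m, ∑ q : Fin m × Fin m,
        (c2 p * c2 q) * (chi (D p) x * chi (D q) x) := by
      intro x
      rw [show (Q x)^4 = ((Q x)^2)^2 by ring, hQ2 x, sq, Finset.sum_mul_sum]
      exact Finset.sum_congr rfl fun p _ => Finset.sum_congr rfl fun q _ => by ring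
    simp only [hQ4]
    rw [Finset.sum_comm]
    have hswap : ∀ p, ∑ x : Fin n → Bool, ∑ q, (c2 p * c2 q) * (chi (D p) x * chi (D q) x)
        = ∑ q, (c2 p * c2 q) * (if D p = D q then N else 0) := by
      intro p
      rw [Finset.sum_comm]
      refine Finset.sum_congr rfl fun q _ => ?_
      rw [← Finset.mul_sum, sum_chi_mul]
    rw [Finset.sum_congr rfl fun p _ => hswap p]
    have hfilter : ∑ p : Fin m × Fin m, ∑ q : Fin m × Fin m,
        (c2 p * c2 q) * (if D p = D q then N else 0)
        = N * ∑ z ∈ Finset.univ.filter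
            (fun z : (Fin m × Fin m) × (Fin m × Fin m) => D z.1 = D z.2),
            c2 z.1 * c2 z.2 := by
      conv_rhs => rw [Finset.mul_sum, Finset.sum_filter, Fintype.sum_prod_type]
      refine Finset.sum_congr rfl fun p _ => Finset.sum_congr rfl fun q _ => ?_
      by_cases h : D p = D q <;> simp [h] <;> ring
    rw [hfilter]
    have hcount := counting I hinj hρ c
    have : ∑ z ∈ Finset.univ.filter
        (fun z : (Fin m × Fin m) × (Fin m × Fin m) => D z.1 = D z.2),
        c2 z.1 * c2 z.2 ≤ bb * S^2 := hcount
    calc N * ∑ z ∈ Finset.univ.filter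
          (fun z : (Fin m × Fin m) × (Fin m × Fin m) => D z.1 = D z.2),
          c2 z.1 * c2 z.2
        ≤ N * (bb * S^2) := by
          exact mul_le_mul_of_nonneg_left this hN0.le
      _ = bb * N * S^2 := by ring
  -- Cauchy–Schwarz chain
  set A1 : ℝ := ∑ x : Fin n → Bool, |Q x| with hA1
  set A3 : ℝ := ∑ x : Fin n → Bool, |Q x|^3 with hA3
  have hA1nn : 0 ≤ A1 := Finset.sum_nonneg fun x _ => abs_nonneg _
  have hA3nn : 0 ≤ A3 := Finset.sum_nonneg fun x _ => by positivity
  have csA : (N*S)^2 ≤ A1 * A3 := by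
    have e1 : ∀ x : Fin n → Bool,
        Real.sqrt |Q x| * (|Q x| * Real.sqrt |Q x|) = (Q x)^2 := by
      intro x
      rw [show Real.sqrt |Q x| * (|Q x| * Real.sqrt |Q x|)
          = (Real.sqrt |Q x| * Real.sqrt |Q x|) * |Q x| by ring,
        Real.mul_self_sqrt (abs_nonneg _), abs_mul_abs_self, sq]
    have hcs := Finset.sum_mul_sq_le_sq_mul_sq Finset.univ
      (fun x : Fin n → Bool => Real.sqrt |Q x|) (fun x => |Q x| * Real.sqrt |Q x|)
    rw [Finset.sum_congr rfl (fun x _ => e1 x)] at hcs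
    have e2 : ∀ x : Fin n → Bool, (Real.sqrt |Q x|)^2 = |Q x| :=
      fun x => Real.sq_sqrt (abs_nonneg _)
    have e3 : ∀ x : Fin n → Bool, (|Q x| * Real.sqrt |Q x|)^2 = |Q x|^3 := by
      intro x
      rw [mul_pow, Real.sq_sqrt (abs_nonneg _)]
      ring
    rw [Finset.sum_congr rfl (fun x _ => e2 x),
      Finset.sum_congr rfl (fun x _ => e3 x)] at hcs
    rw [← h2] at *
    exact hcs
  have csB : A3^2 ≤ (N*S) * (bb * N * S^2) := by
    have e1 : ∀ x : Fin n → Bool, |Q x| * (Q x)^2 = |Q x|^3 := by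
      intro x
      rw [show (Q x)^2 = |Q x|^2 from (sq_abs _).symm]
      ring
    have hcs := Finset.sum_mul_sq_le_sq_mul_sq Finset.univ
      (fun x : Fin n → Bool => |Q x|) (fun x => (Q x)^2)
    rw [Finset.sum_congr rfl (fun x _ => e1 x)] at hcs
    have e2 : ∀ x : Fin n → Bool, (|Q x|)^2 = (Q x)^2 := fun x => sq_abs _
    have e3 : ∀ x : Fin n → Bool, ((Q x)^2)^2 = (Q x)^4 := fun x => by ring
    rw [Finset.sum_congr rfl (fun x _ => e2 x),
      Finset.sum_congr rfl (fun x _ => e3 x), h2] at hcs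
    calc A3^2 ≤ (N*S) * ∑ x : Fin n → Bool, (Q x)^4 := hcs
      _ ≤ (N*S) * (bb * N * S^2) := by
          exact mul_le_mul_of_nonneg_left h4 (by positivity)
  have hA1lower : N^2 * S / bb ≤ A1^2 := by
    rw [div_le_iff₀ hbb0]
    have hpos : (0:ℝ) < N^2 * S^3 := by positivity
    have key : (N^2*S) * (N^2*S^3) ≤ (A1^2*bb) * (N^2*S^3) := by
      calc (N^2*S) * (N^2*S^3) = ((N*S)^2)^2 := by ring
        _ ≤ (A1*A3)^2 := pow_le_pow_left₀ (by positivity) csA 2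
        _ = A1^2 * A3^2 := by ring
        _ ≤ A1^2 * ((N*S) * (bb*N*S^2)) := mul_le_mul_of_nonneg_left csB (sq_nonneg A1)
        _ = (A1^2*bb) * (N^2*S^3) := by ring
    exact le_of_mul_le_mul_right key hpos
  set t : ℝ := Real.sqrt (S / bb) with ht
  have ht0 : 0 < t := Real.sqrt_pos.mpr (div_pos hS0 hbb0)
  have hA1c : N * t ≤ A1 := by
    have e : Real.sqrt (N^2 * S / bb) = N * t := by
      rw [mul_div_assoc, Real.sqrt_mul (by positivity), Real.sqrt_sq hN0.le, ht]
    calc N * t = Real.sqrt (N^2*S/bb) := e.symm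
      _ ≤ Real.sqrt (A1^2) := Real.sqrt_le_sqrt hA1lower
      _ = A1 := Real.sqrt_sq hA1nn
  -- find a good x
  have hsum : ∑ _x : Fin n → Bool, t ≤ ∑ x : Fin n → Bool, (|Q x| + Q x) := by
    rw [Finset.sum_add_distrib, h1, add_zero, Finset.sum_const, nsmul_eq_mul]
    have hcard : ((Finset.univ : Finset (Fin n → Bool)).card : ℝ) = N := by
      rw [hN]; simp [Fintype.card_fun]
    rw [hcard]
    exact hA1c
  obtain ⟨x, -, hx⟩ := Finset.exists_le_of_sum_le Finset.univ_nonempty hsum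
  have hQx : t / 2 ≤ Q x := by
    rcases le_or_gt (Q x) 0 with h | h
    · rw [abs_of_nonpos h] at hx; linarith
    · rw [abs_of_pos h] at hx; linarith
  refine ⟨x, ?_⟩
  have hterm : ∀ j, (if (∏ i ∈ I j, sgn (x i)) = b j then (w j:ℝ) else 0)
      = (w j : ℝ)/2 + (c j * chi (I j) x)/2 := by
    intro j
    have hch : (∏ i ∈ I j, sgn (x i)) = chi (I j) x := rfl
    have hcj : c j = (w j : ℝ) * b j := rfl
    rw [hch]
    rcases hb j with hbj | hbj <;> rcases chi_pm (I j) x with hχ | hχ <;>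
      simp only [hcj, hbj, hχ] <;> norm_num <;> ring_nf
  rw [Finset.sum_congr rfl (fun j _ => hterm j), Finset.sum_add_distrib,
    ← Finset.sum_div, ← Finset.sum_div]
  have hQx' : ∑ i : Fin m, c i * chi (I i) x = Q x := rfl
  rw [hQx']
  have hmb : Real.sqrt ((m:ℝ) / bb) ≤ t := by
    rw [ht]
    exact Real.sqrt_le_sqrt (by gcongr)
  have hfin : (1/4 : ℝ) * Real.sqrt ((m:ℝ) / bb) ≤ Q x / 2 := by
    linarith [hmb, hQx]
  rw [ge_iff_le]
  linarith
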